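/- arXiv:2411.10067 — 7 statements merged into one kernel-verified Lean document; each statement's English description precedes it below -/
import Mathlib

section
/- There is no perfect deterministic classical strategy for the magic square game: there do not exist functions f1, f2 : Fin 3 → (Fin 3 → ZMod 2) such that for every row index r : Fin 3 and column index c : Fin 3 the triple of conditions (f1 r) c = (f2 c) r, (f1 r) 0 + (f1 r) 1 + (f1 r) 2 = 0, and (f2 c) 0 + (f2 c) 1 + (f2 c) 2 = 1 holds. -/
/-- There is no perfect deterministic classical strategy for the magic square game. -/
theorem no_perfect_deterministic_magic_square_strategy :
    ¬ ∃ (f1 f2 : Fin 3 → (Fin 3 → ZMod 2)),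
      ∀ r c : Fin 3,
        (f1 r) c = (f2 c) r ∧
        (f1 r) 0 + (f1 r) 1 + (f1 r) 2 = 0 ∧
        (f2 c) 0 + (f2 c) 1 + (f2 c) 2 = 1 := by
  rintro ⟨f1, f2, h⟩
  have A : ∀ r, (f1 r) 0 + (f1 r) 1 + (f1 r) 2 = 0 := fun r => (h r 0).2.1
  have B : ∀ c, (f2 c) 0 + (f2 c) 1 + (f2 c) 2 = 1 := fun c => (h 0 c).2.2
  have E : ∀ r c, (f1 r) c = (f2 c) r := fun r c => (h r c).1
  have key : (0 : ZMod 2) = 1 := by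
    have four : (4:ZMod 2) = 0 := by decide
    linear_combination -four + (A 0) + (A 1) + (A 2) - (B 0) - (B 1) - (B 2)
      - (E 0 0) - (E 0 1) - (E 0 2) - (E 1 0) - (E 1 1) - (E 1 2)
      - (E 2 0) - (E 2 1) - (E 2 2)
  exact absurd key (by decide)
end

section
/- Every deterministic classical strategy wins at most 8 of the 9 question pairs of the magic square game: for all f1, f2 : Fin 3 → (Fin 3 → ZMod 2), the cardinality of the set of pairs (r, c) ∈ Fin 3 × Fin 3 such that (f1 r) c = (f2 c) r, (f1 r) 0 + (f1 r) 1 + (f1 r) 2 = 0, and (f2 c) 0 + (f2 c) 1 + (f2 c) 2 = 1 is at most 8. -/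
/-- Every deterministic classical strategy wins at most 8 of the 9 question pairs
of the magic square game. -/
theorem deterministic_magic_square_wins_at_most_eight
    (f1 f2 : Fin 3 → (Fin 3 → ZMod 2)) :
    (Finset.univ.filter (fun p : Fin 3 × Fin 3 =>
      (f1 p.1) p.2 = (f2 p.2) p.1 ∧
      (f1 p.1) 0 + (f1 p.1) 1 + (f1 p.1) 2 = 0 ∧
      (f2 p.2) 0 + (f2 p.2) 1 + (f2 p.2) 2 = 1)).card ≤ 8 := by
  by_contra h
  push_neg at h
  have hall : ∀ p : Fin 3 × Fin 3,
      (f1 p.1) p.2 = (f2 p.2) p.1 ∧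
      (f1 p.1) 0 + (f1 p.1) 1 + (f1 p.1) 2 = 0 ∧
      (f2 p.2) 0 + (f2 p.2) 1 + (f2 p.2) 2 = 1 := by
    intro p
    by_contra hp
    have hss : (Finset.univ.filter (fun q : Fin 3 × Fin 3 =>
        (f1 q.1) q.2 = (f2 q.2) q.1 ∧
        (f1 q.1) 0 + (f1 q.1) 1 + (f1 q.1) 2 = 0 ∧
        (f2 q.2) 0 + (f2 q.2) 1 + (f2 q.2) 2 = 1)) ⊂ Finset.univ := by
      refine Finset.ssubset_univ_iff.mpr ?_
      intro hcontra
      have hmem : p ∈ Finset.univ.filter (fun q : Fin 3 × Fin 3 =>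
          (f1 q.1) q.2 = (f2 q.2) q.1 ∧
          (f1 q.1) 0 + (f1 q.1) 1 + (f1 q.1) 2 = 0 ∧
          (f2 q.2) 0 + (f2 q.2) 1 + (f2 q.2) 2 = 1) := by
        rw [hcontra]; exact Finset.mem_univ p
      exact hp (Finset.mem_filter.mp hmem).2
    have := Finset.card_lt_card hss
    simp only [Finset.card_univ, Fintype.card_prod, Fintype.card_fin] at this
    omega
  have h1 : ∀ r, f1 r 0 + f1 r 1 + f1 r 2 = 0 := fun r => (hall (r, 0)).2.1
  have h2 : ∀ c, f2 c 0 + f2 c 1 + f2 c 2 = 1 := fun c => (hall (0, c)).2.2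
  have he : ∀ r c, f1 r c = f2 c r := fun r c => (hall (r, c)).1
  have : (0 : ZMod 2) = 1 := by
    calc (0 : ZMod 2)
        = (f1 0 0 + f1 0 1 + f1 0 2) + (f1 1 0 + f1 1 1 + f1 1 2)
          + (f1 2 0 + f1 2 1 + f1 2 2) := by rw [h1, h1, h1]; ring
      _ = (f2 0 0 + f2 0 1 + f2 0 2) + (f2 1 0 + f2 1 1 + f2 1 2)
          + (f2 2 0 + f2 2 1 + f2 2 2) := by
            rw [he 0 0, he 0 1, he 0 2, he 1 0, he 1 1, he 1 2,
              he 2 0, he 2 1, he 2 2]; ring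
      _ = 1 + 1 + 1 := by rw [h2, h2, h2]
      _ = 1 := by decide
  simp at this
end

section
/- Classical strategies with arbitrary shared randomness win the magic square game with probability at most 8/9 under uniformly random questions: for every finite type Ω, every function μ : Ω → ℝ with μ ω ≥ 0 for all ω and ∑_ω μ ω = 1, and every pair of families F1, F2 : Ω → (Fin 3 → (Fin 3 → ZMod 2)), the expected number of winning question pairs ∑_ω μ ω * (card of {(r, c) ∈ Fin 3 × Fin 3 | (F1 ω r) c = (F2 ω c) r ∧ (F1 ω r) 0 + (F1 ω r) 1 + (F1 ω r) 2 = 0 ∧ (F2 ω c) 0 + (F2 ω c) 1 + (F2 ω c) 2 = 1}) is at most 8; equivalently, the winning probability (1/9 times this expectation) is at most 8/9. -/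
lemma magic_square_parity_contradiction (a b : Fin 3 → Fin 3 → ZMod 2)
    (h00 : a 0 0 = b 0 0) (h01 : a 0 1 = b 1 0) (h02 : a 0 2 = b 2 0)
    (h10 : a 1 0 = b 0 1) (h11 : a 1 1 = b 1 1) (h12 : a 1 2 = b 2 1)
    (h20 : a 2 0 = b 0 2) (h21 : a 2 1 = b 1 2) (h22 : a 2 2 = b 2 2)
    (hr0 : a 0 0 + a 0 1 + a 0 2 = 0) (hr1 : a 1 0 + a 1 1 + a 1 2 = 0)
    (hr2 : a 2 0 + a 2 1 + a 2 2 = 0)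
    (hc0 : b 0 0 + b 0 1 + b 0 2 = 1) (hc1 : b 1 0 + b 1 1 + b 1 2 = 1)
    (hc2 : b 2 0 + b 2 1 + b 2 2 = 1) : False := by
  have h3 : (1 : ZMod 2) + 1 = 0 := by decide
  have : (0 : ZMod 2) = 1 := by
    linear_combination hr0 + hr1 + hr2 + hc0 + hc1 + hc2
      + h00 + h01 + h02 + h10 + h11 + h12 + h20 + h21 + h22
      + (1 - (a 0 0 + a 0 1 + a 0 2 + a 1 0 + a 1 1 + a 1 2 + a 2 0 + a 2 1 + a 2 2)) * h3
  exact absurd this (by decide)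

lemma magic_square_det_le (f1 f2 : Fin 3 → Fin 3 → ZMod 2) :
    (Finset.univ.filter (fun p : Fin 3 × Fin 3 =>
        (f1 p.1) p.2 = (f2 p.2) p.1 ∧
        (f1 p.1) 0 + (f1 p.1) 1 + (f1 p.1) 2 = 0 ∧
        (f2 p.2) 0 + (f2 p.2) 1 + (f2 p.2) 2 = 1)).card ≤ 8 := by
  by_contra h
  push_neg at h
  have hle : (Finset.univ.filter (fun p : Fin 3 × Fin 3 =>
        (f1 p.1) p.2 = (f2 p.2) p.1 ∧
        (f1 p.1) 0 + (f1 p.1) 1 + (f1 p.1) 2 = 0 ∧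
        (f2 p.2) 0 + (f2 p.2) 1 + (f2 p.2) 2 = 1)).card ≤ 9 := by
    exact (Finset.card_filter_le Finset.univ _).trans (by decide)
  have hcard : (Finset.univ.filter (fun p : Fin 3 × Fin 3 =>
        (f1 p.1) p.2 = (f2 p.2) p.1 ∧
        (f1 p.1) 0 + (f1 p.1) 1 + (f1 p.1) 2 = 0 ∧
        (f2 p.2) 0 + (f2 p.2) 1 + (f2 p.2) 2 = 1)).card = 9 := by omega
  have huniv := Finset.eq_univ_of_card _ (by rw [hcard]; rfl)
  have hall : ∀ r c : Fin 3,
      (f1 r) c = (f2 c) r ∧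
      (f1 r) 0 + (f1 r) 1 + (f1 r) 2 = 0 ∧
      (f2 c) 0 + (f2 c) 1 + (f2 c) 2 = 1 := by
    intro r c
    have := Finset.filter_eq_self.mp huniv (r, c) (Finset.mem_univ _)
    simpa using this
  exact magic_square_parity_contradiction f1 f2
    (hall 0 0).1 (hall 0 1).1 (hall 0 2).1
    (hall 1 0).1 (hall 1 1).1 (hall 1 2).1
    (hall 2 0).1 (hall 2 1).1 (hall 2 2).1
    (hall 0 0).2.1 (hall 1 0).2.1 (hall 2 0).2.1
    (hall 0 0).2.2 (hall 0 1).2.2 (hall 0 2).2.2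

/-- Classical strategies with arbitrary shared randomness win the magic square game
with probability at most `8/9` under uniformly random questions. -/
theorem shared_randomness_magic_square_winning_probability_le
    (Ω : Type*) [Fintype Ω] (μ : Ω → ℝ)
    (hμ0 : ∀ ω, 0 ≤ μ ω) (hμ1 : ∑ ω, μ ω = 1)
    (F1 F2 : Ω → (Fin 3 → (Fin 3 → ZMod 2))) :
    (∑ ω, μ ω *
      ((Finset.univ.filter (fun p : Fin 3 × Fin 3 =>
        (F1 ω p.1) p.2 = (F2 ω p.2) p.1 ∧
        (F1 ω p.1) 0 + (F1 ω p.1) 1 + (F1 ω p.1) 2 = 0 ∧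
        (F2 ω p.2) 0 + (F2 ω p.2) 1 + (F2 ω p.2) 2 = 1)).card : ℝ)) ≤ 8 ∧
    (1 / 9 : ℝ) * (∑ ω, μ ω *
      ((Finset.univ.filter (fun p : Fin 3 × Fin 3 =>
        (F1 ω p.1) p.2 = (F2 ω p.2) p.1 ∧
        (F1 ω p.1) 0 + (F1 ω p.1) 1 + (F1 ω p.1) 2 = 0 ∧
        (F2 ω p.2) 0 + (F2 ω p.2) 1 + (F2 ω p.2) 2 = 1)).card : ℝ)) ≤ 8 / 9 := by
  have key : (∑ ω, μ ω *
      ((Finset.univ.filter (fun p : Fin 3 × Fin 3 =>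
        (F1 ω p.1) p.2 = (F2 ω p.2) p.1 ∧
        (F1 ω p.1) 0 + (F1 ω p.1) 1 + (F1 ω p.1) 2 = 0 ∧
        (F2 ω p.2) 0 + (F2 ω p.2) 1 + (F2 ω p.2) 2 = 1)).card : ℝ)) ≤ 8 := by
    calc (∑ ω, μ ω * _) ≤ ∑ ω, μ ω * 8 := by
          apply Finset.sum_le_sum
          intro ω _
          apply mul_le_mul_of_nonneg_left _ (hμ0 ω)
          exact_mod_cast magic_square_det_le (F1 ω) (F2 ω)
      _ = 8 := by rw [← Finset.sum_mul, hμ1, one_mul]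
  exact ⟨key, by linarith⟩
end

section
/- The observables within each row of the Mermin–Peres magic square table pairwise commute, and the observables within each column pairwise commute: for all r, c, c' : Fin 3, O r c * O r c' = O r c' * O r c, and for all c, r, r' : Fin 3, O r c * O r' c = O r' c * O r c. -/
open Matrix
open scoped Kronecker

/-- Pauli `X` matrix. -/
def pauliX : Matrix (Fin 2) (Fin 2) ℂ := !![0, 1; 1, 0]

/-- Pauli `Y` matrix. -/
def pauliY : Matrix (Fin 2) (Fin 2) ℂ := !![0, -Complex.I; Complex.I, 0]

/-- Pauli `Z` matrix. -/
def pauliZ : Matrix (Fin 2) (Fin 2) ℂ := !![1, 0; 0, -1]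

/-- The Mermin–Peres magic square table of observables. -/
def merminPeres : Fin 3 → Fin 3 → Matrix (Fin 2 × Fin 2) (Fin 2 × Fin 2) ℂ :=
  ![![pauliX ⊗ₖ 1, pauliX ⊗ₖ pauliX, 1 ⊗ₖ pauliX],
    ![-(pauliX ⊗ₖ pauliZ), pauliY ⊗ₖ pauliY, -(pauliZ ⊗ₖ pauliX)],
    ![1 ⊗ₖ pauliZ, pauliZ ⊗ₖ pauliZ, pauliZ ⊗ₖ 1]]

section helpers

variable {A B C D : Matrix (Fin 2) (Fin 2) ℂ}

lemma kron_mul_comm (h1 : A * C = C * A) (h2 : B * D = D * B) :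
    (A ⊗ₖ B) * (C ⊗ₖ D) = (C ⊗ₖ D) * (A ⊗ₖ B) := by
  rw [← Matrix.mul_kronecker_mul, ← Matrix.mul_kronecker_mul, h1, h2]

lemma neg_kron (A : Matrix (Fin 2) (Fin 2) ℂ) (B : Matrix (Fin 2) (Fin 2) ℂ) :
    (-A) ⊗ₖ B = -(A ⊗ₖ B) := by
  ext ⟨i, j⟩ ⟨k, l⟩
  simp [Matrix.kroneckerMap_apply]

lemma kron_neg (A : Matrix (Fin 2) (Fin 2) ℂ) (B : Matrix (Fin 2) (Fin 2) ℂ) :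
    A ⊗ₖ (-B) = -(A ⊗ₖ B) := by
  ext ⟨i, j⟩ ⟨k, l⟩
  simp [Matrix.kroneckerMap_apply]

lemma kron_mul_anticomm (h1 : A * C = -(C * A)) (h2 : B * D = -(D * B)) :
    (A ⊗ₖ B) * (C ⊗ₖ D) = (C ⊗ₖ D) * (A ⊗ₖ B) := by
  rw [← Matrix.mul_kronecker_mul, ← Matrix.mul_kronecker_mul, h1, h2,
    neg_kron, kron_neg, neg_neg]

lemma pauliXY : pauliX * pauliY = -(pauliY * pauliX) := by
  ext i j
  fin_cases i <;> fin_cases j <;>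
    simp [pauliX, pauliY, mul_apply, Fin.sum_univ_two]

lemma pauliYX : pauliY * pauliX = -(pauliX * pauliY) := by
  rw [pauliXY, neg_neg]

lemma pauliXZ : pauliX * pauliZ = -(pauliZ * pauliX) := by
  ext i j
  fin_cases i <;> fin_cases j <;>
    simp [pauliX, pauliZ, mul_apply, Fin.sum_univ_two]

lemma pauliZX : pauliZ * pauliX = -(pauliX * pauliZ) := by
  rw [pauliXZ, neg_neg]

lemma pauliYZ : pauliY * pauliZ = -(pauliZ * pauliY) := by
  ext i j
  fin_cases i <;> fin_cases j <;>
    simp [pauliY, pauliZ, mul_apply, Fin.sum_univ_two]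

lemma pauliZY : pauliZ * pauliY = -(pauliY * pauliZ) := by
  rw [pauliYZ, neg_neg]

end helpers

attribute [local irreducible] pauliX pauliY pauliZ

set_option maxHeartbeats 2000000 in
/-- The observables within each row of the Mermin–Peres magic square table pairwise
commute, and the observables within each column pairwise commute. -/
theorem merminPeres_row_col_commute :
    (∀ r c c' : Fin 3,
      merminPeres r c * merminPeres r c' = merminPeres r c' * merminPeres r c) ∧
    (∀ c r r' : Fin 3,
      merminPeres r c * merminPeres r' c = merminPeres r' c * merminPeres r c) := by
  constructor <;>
  · intro a b c
    fin_cases a <;> fin_cases b <;> fin_cases c <;>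
      simp only [merminPeres, Fin.isValue, Matrix.cons_val', Matrix.cons_val_zero,
        Matrix.cons_val_one, Matrix.head_cons, Matrix.head_fin_const, Matrix.empty_val',
        Matrix.cons_val_fin_one, Matrix.cons_val_two, Matrix.tail_cons,
        neg_mul, mul_neg, neg_neg, neg_inj, Fin.mk_zero, Fin.mk_one, Fin.reduceFinMk] <;>
      first
        | exact kron_mul_comm rfl rfl
        | exact kron_mul_comm rfl (by rw [one_mul, mul_one])
        | exact kron_mul_comm (by rw [one_mul, mul_one]) rfl
        | exact kron_mul_comm (by rw [one_mul, mul_one]) (by rw [one_mul, mul_one])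
        | exact kron_mul_anticomm pauliXY pauliZY
        | exact kron_mul_anticomm pauliYX pauliYZ
        | exact kron_mul_anticomm pauliXZ pauliZX
        | exact kron_mul_anticomm pauliZX pauliXZ
        | exact kron_mul_anticomm pauliYZ pauliYX
        | exact kron_mul_anticomm pauliZY pauliXY
        | exact kron_mul_anticomm pauliXY pauliXY
        | exact kron_mul_anticomm pauliYX pauliYX
        | exact kron_mul_anticomm pauliXZ pauliXZ
        | exact kron_mul_anticomm pauliZX pauliZX
        | exact kron_mul_anticomm pauliYZ pauliYZ
        | exact kron_mul_anticomm pauliZY pauliZY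
end

section
/- Measuring the extended POVMs on the purified state induces the same classical input distribution as measuring the original POVMs on the mixed state: let d1, d2, Zt be finite types, p : Zt → ℝ with p z ≥ 0 for all z, φz : Zt → ((d1 × d2) → ℂ) a family of vectors, and let φ : Matrix (d1 × d2) (d1 × d2) ℂ be φ = ∑_z (p z : ℂ) • vecMulVec (φz z) (star ∘ φz z). Define the vector ψ : (d1 × Zt) × (d2 × Zt) → ℂ by ψ((a,z),(b,z')) = if z = z' then (Real.sqrt (p z) : ℂ) * φz z (a,b) else 0. Then for all matrices L1 : Matrix d1 d1 ℂ and L2 : Matrix d2 d2 ℂ, ∑_{z1, z2 : Zt} star ψ ⬝ᵥ ((L1 ⊗ₖ (stdBasisMatrix z1 z1 1)) ⊗ₖ (L2 ⊗ₖ (stdBasisMatrix z2 z2 1)) *ᵥ ψ) = trace ((L1 ⊗ₖ L2) * φ). -/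
open Matrix
open scoped Kronecker

/-- Measuring the extended POVMs on the purified state induces the same classical
input distribution as measuring the original POVMs on the mixed state. -/
theorem purification_extended_povm_input_distribution
    {d1 d2 Zt : Type*} [Fintype d1] [Fintype d2] [Fintype Zt]
    [DecidableEq d1] [DecidableEq d2] [DecidableEq Zt]
    (p : Zt → ℝ) (hp : ∀ z, 0 ≤ p z)
    (φz : Zt → ((d1 × d2) → ℂ))
    (φ : Matrix (d1 × d2) (d1 × d2) ℂ)
    (hφ : φ = ∑ z, (p z : ℂ) • vecMulVec (φz z) (star ∘ φz z))
    (ψ : (d1 × Zt) × (d2 × Zt) → ℂ)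
    (hψ : ∀ (a : d1) (z : Zt) (b : d2) (z' : Zt),
      ψ ((a, z), (b, z')) =
        if z = z' then (Real.sqrt (p z) : ℂ) * φz z (a, b) else 0)
    (L1 : Matrix d1 d1 ℂ) (L2 : Matrix d2 d2 ℂ) :
    ∑ z1 : Zt, ∑ z2 : Zt,
      star ψ ⬝ᵥ
        (((L1 ⊗ₖ single z1 z1 (1 : ℂ)) ⊗ₖ
          (L2 ⊗ₖ single z2 z2 (1 : ℂ))) *ᵥ ψ)
      = ((L1 ⊗ₖ L2) * φ).trace := by
  have hψ' : ∀ x : (d1 × Zt) × (d2 × Zt), ψ x =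
      if x.1.2 = x.2.2 then (Real.sqrt (p x.1.2) : ℂ) * φz x.1.2 (x.1.1, x.2.1) else 0 := by
    rintro ⟨⟨a, z⟩, ⟨b, z'⟩⟩; exact hψ a z b z'
  subst hφ
  simp only [dotProduct, mulVec, Matrix.trace, Matrix.mul_apply, kroneckerMap_apply,
    Matrix.diag_apply, vecMulVec_apply, Finset.sum_apply, Matrix.smul_apply,
    Pi.star_apply, hψ', Matrix.single, of_apply, Function.comp, smul_eq_mul,
    Fintype.sum_prod_type]
  simp only [mul_ite, ite_mul, mul_zero, zero_mul, mul_one, mul_boole, boole_mul,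
    Finset.sum_ite_eq, Finset.sum_ite_eq', Finset.mem_univ, if_true, star_zero,
    Finset.sum_ite_irrel, Finset.sum_const_zero, star_mul']
  simp only [Matrix.sum_apply, Matrix.smul_apply, vecMulVec_apply, Function.comp,
    smul_eq_mul, Finset.mul_sum, Finset.sum_mul, ite_and, mul_ite, ite_mul, mul_zero,
    zero_mul, star_zero, Finset.sum_ite_eq, Finset.sum_ite_eq', Finset.mem_univ, if_true,
    Finset.sum_ite_irrel, Finset.sum_const_zero, star_mul', RCLike.star_def]
  have hsq : ∀ z, ((Real.sqrt (p z) : ℂ)) * ((Real.sqrt (p z)) : ℂ) = (p z : ℂ) := fun z => by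
    rw [← Complex.ofReal_mul, Real.mul_self_sqrt (hp z)]
  rw [Finset.sum_comm]
  conv_lhs => enter [2, a]; rw [Finset.sum_comm]
  conv_lhs => enter [2, a, 2, b]; rw [Finset.sum_comm]
  conv_lhs => enter [2, a, 2, b, 2, a']; rw [Finset.sum_comm]
  refine Finset.sum_congr rfl fun a _ => Finset.sum_congr rfl fun b _ =>
    Finset.sum_congr rfl fun a' _ => Finset.sum_congr rfl fun b' _ =>
    Finset.sum_congr rfl fun z _ => ?_
  simp only [_root_.map_mul, Complex.conj_ofReal]
  rw [← hsq z]
  ring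
end

section
/- The purified state reproduces all expectation values of operators on the original systems: let d1, d2, Zt be finite types, p : Zt → ℝ with p z ≥ 0 for all z, φz : Zt → ((d1 × d2) → ℂ) a family of vectors, and let φ : Matrix (d1 × d2) (d1 × d2) ℂ be φ = ∑_z (p z : ℂ) • vecMulVec (φz z) (star ∘ φz z). Define ψ : (d1 × Zt) × (d2 × Zt) → ℂ by ψ((a,z),(b,z')) = if z = z' then (Real.sqrt (p z) : ℂ) * φz z (a,b) else 0. Then for every M : Matrix (d1 × d2) (d1 × d2) ℂ, defining Mext : Matrix ((d1 × Zt) × (d2 × Zt)) ((d1 × Zt) × (d2 × Zt)) ℂ by Mext ((a,z),(b,z')) ((a',w),(b',w')) = (if z = w ∧ z' = w' then M (a,b) (a',b') else 0), one has star ψ ⬝ᵥ (Mext *ᵥ ψ) = trace (M * φ). -/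
open Matrix

/-- The purified state reproduces all expectation values of operators acting on the
original systems (extended by the identity on the purifying systems). -/
theorem purification_reproduces_expectation_values
    {d1 d2 Zt : Type*} [Fintype d1] [Fintype d2] [Fintype Zt]
    [DecidableEq Zt]
    (p : Zt → ℝ) (hp : ∀ z, 0 ≤ p z)
    (φz : Zt → ((d1 × d2) → ℂ))
    (φ : Matrix (d1 × d2) (d1 × d2) ℂ)
    (hφ : φ = ∑ z, (p z : ℂ) • vecMulVec (φz z) (star ∘ φz z))
    (ψ : (d1 × Zt) × (d2 × Zt) → ℂ)
    (hψ : ∀ (a : d1) (z : Zt) (b : d2) (z' : Zt),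
      ψ ((a, z), (b, z')) =
        if z = z' then (Real.sqrt (p z) : ℂ) * φz z (a, b) else 0)
    (M : Matrix (d1 × d2) (d1 × d2) ℂ)
    (Mext : Matrix ((d1 × Zt) × (d2 × Zt)) ((d1 × Zt) × (d2 × Zt)) ℂ)
    (hM : ∀ (a : d1) (z : Zt) (b : d2) (z' : Zt) (a' : d1) (w : Zt) (b' : d2) (w' : Zt),
      Mext ((a, z), (b, z')) ((a', w), (b', w')) =
        if z = w ∧ z' = w' then M (a, b) (a', b') else 0) :
    star ψ ⬝ᵥ (Mext *ᵥ ψ) = (M * φ).trace := by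
  subst hφ
  simp only [dotProduct, mulVec, Pi.star_apply, trace, diag_apply, Matrix.mul_apply,
    Matrix.sum_apply, Matrix.smul_apply, vecMulVec_apply, Function.comp_apply, smul_eq_mul,
    Fintype.sum_prod_type]
  simp only [hψ, hM, ite_and, mul_ite, ite_mul, zero_mul, mul_zero, apply_ite (star : ℂ → ℂ), star_zero,
    Finset.sum_ite_irrel, Finset.sum_ite_eq, Finset.sum_ite_eq', Finset.mem_univ, if_true,
    Finset.sum_const_zero]
  simp only [star_mul', Complex.star_def, Complex.conj_ofReal, Finset.mul_sum, Finset.sum_mul]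
  refine Finset.sum_congr rfl fun a _ => ?_
  conv_lhs => rw [Finset.sum_comm]
  refine Finset.sum_congr rfl fun b _ => ?_
  conv_lhs => rw [Finset.sum_comm]
  refine Finset.sum_congr rfl fun a' _ => ?_
  conv_lhs => rw [Finset.sum_comm]
  refine Finset.sum_congr rfl fun b' _ => ?_
  refine Finset.sum_congr rfl fun z _ => ?_
  rw [show ((Real.sqrt (p z) : ℂ)) * (starRingEnd ℂ) (φz z (a, b)) *
      (M (a, b) (a', b') * ((Real.sqrt (p z) : ℂ) * φz z (a', b'))) =
      ((Real.sqrt (p z) : ℂ) * (Real.sqrt (p z) : ℂ)) *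
      (M (a, b) (a', b') * (φz z (a', b') * (starRingEnd ℂ) (φz z (a, b)))) by ring,
    ← Complex.ofReal_mul, Real.mul_self_sqrt (hp z)]
  ring
end

section
/- Parity constraint for commuting involutions: let n be a finite type and A, B, C : Matrix n n ℂ be Hermitian matrices with A * A = 1, B * B = 1, C * C = 1, pairwise commuting (A*B = B*A, A*C = C*A, B*C = C*B), and satisfying A * B * C = σ • 1 for some σ : ℂ with σ = 1 or σ = -1. Then for all ε1, ε2, ε3 : ℂ, each equal to 1 or -1, with ε1 * ε2 * ε3 = -σ, one has (1 + ε1 • A) * (1 + ε2 • B) * (1 + ε3 • C) = 0. -/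
open Matrix

/-- Parity constraint for commuting involutions: if pairwise-commuting Hermitian
involutions `A`, `B`, `C` satisfy `A * B * C = σ • 1` with `σ = ±1`, then the joint
eigenprojector onto any sign pattern `(ε1, ε2, ε3)` with `ε1 * ε2 * ε3 = -σ` vanishes. -/
theorem commuting_involutions_parity_projector_eq_zero
    {n : Type*} [Fintype n] [DecidableEq n]
    (A B C : Matrix n n ℂ)
    (hA : A.IsHermitian) (hB : B.IsHermitian) (hC : C.IsHermitian)
    (hA2 : A * A = 1) (hB2 : B * B = 1) (hC2 : C * C = 1)
    (hAB : A * B = B * A) (hAC : A * C = C * A) (hBC : B * C = C * B)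
    (σ : ℂ) (hσ : σ = 1 ∨ σ = -1)
    (hABC : A * B * C = σ • (1 : Matrix n n ℂ)) :
    ∀ ε1 ε2 ε3 : ℂ,
      (ε1 = 1 ∨ ε1 = -1) → (ε2 = 1 ∨ ε2 = -1) → (ε3 = 1 ∨ ε3 = -1) →
      ε1 * ε2 * ε3 = -σ →
      (1 + ε1 • A) * (1 + ε2 • B) * (1 + ε3 • C) = 0 := by
  intro ε1 ε2 ε3 h1 h2 h3 hprod
  -- A * B = σ • C
  have hAB' : A * B = σ • C := by
    have h : A * B * (C * C) = (σ • (1 : Matrix n n ℂ)) * C := by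
      rw [← hABC]; noncomm_ring
    rw [hC2, mul_one, smul_mul_assoc, one_mul] at h
    exact h
  -- A * C = σ • B
  have hAC' : A * C = σ • B := by
    have h : A * C * (B * B) = (σ • (1 : Matrix n n ℂ)) * B := by
      rw [← hABC]
      calc A * C * (B * B) = A * (C * B) * B := by noncomm_ring
        _ = A * (B * C) * B := by rw [hBC]
        _ = A * B * C * B := by noncomm_ring
    rw [hB2, mul_one, smul_mul_assoc, one_mul] at h
    exact h
  -- B * C = σ • A
  have hBC' : B * C = σ • A := by
    have h : B * C * (A * A) = (σ • (1 : Matrix n n ℂ)) * A := by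
      rw [← hABC]
      calc B * C * (A * A) = B * (C * A) * A := by noncomm_ring
        _ = B * (A * C) * A := by rw [hAC]
        _ = B * A * C * A := by noncomm_ring
        _ = A * B * C * A := by rw [← hAB]
    rw [hA2, mul_one, smul_mul_assoc, one_mul] at h
    exact h
  have expand : (1 + ε1 • A) * (1 + ε2 • B) * (1 + ε3 • C)
      = (1 + ε1 * ε2 * ε3 * σ) • (1 : Matrix n n ℂ)
        + (ε1 + ε2 * ε3 * σ) • A + (ε2 + ε1 * ε3 * σ) • B
        + (ε3 + ε1 * ε2 * σ) • C := by
    simp only [mul_add, add_mul, one_mul, mul_one, smul_mul_assoc, mul_smul_comm,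
      smul_smul, hAB', hAC', hBC', hA2, hB2, hC2, smul_add, add_smul, one_smul]
    module
  rw [expand]
  rcases h1 with rfl | rfl <;> rcases h2 with rfl | rfl <;> rcases h3 with rfl | rfl <;>
    rcases hσ with rfl | rfl <;> revert hprod <;> norm_num
end
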